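/- The prism graph Π_4 is equitably 3-choosable: every 3-uniform list assignment L of Π_4 admits a proper L-coloring in which every color class contains at most 3 vertices. -/

import Mathlib

/-- The prism graph `Π_n = C_n □ K_2`, on vertex set `Fin n × Fin 2`:
`(i,j)` is adjacent to `(i',j')` iff `i = i'` and `j ≠ j'`, or `j = j'` and
`i' − i ≡ ±1 (mod n)`. -/
def prism (n : ℕ) : SimpleGraph (Fin n × Fin 2) :=
  SimpleGraph.fromRel (fun v w =>
    (v.1 = w.1 ∧ v.2 ≠ w.2) ∨ (v.2 = w.2 ∧ w.1.val = (v.1.val + 1) % n))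

/-- `c` is a proper `L`-coloring of the prism graph `Π_n`. -/
def IsProperListColoring {n : ℕ} (L : Fin n × Fin 2 → Finset ℕ)
    (c : Fin n × Fin 2 → ℕ) : Prop :=
  (∀ v, c v ∈ L v) ∧ ∀ v w, (prism n).Adj v w → c v ≠ c w

/-- The color class of color `k` under the coloring `c`. -/
def colorClass {n : ℕ} (c : Fin n × Fin 2 → ℕ) (k : ℕ) : Finset (Fin n × Fin 2) :=
  Finset.univ.filter (fun v => c v = k)

lemma card3_le (a b c : ℕ) : ({a,b,c} : Finset ℕ).card ≤ 3 := by
  have h1 := Finset.card_insert_le a ({b,c} : Finset ℕ)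
  have h2 := Finset.card_insert_le b ({c} : Finset ℕ)
  have h3 : ({c} : Finset ℕ).card = 1 := Finset.card_singleton c
  omega

lemma sdiff2_nonempty (s : Finset ℕ) (h : s.card = 3) (a b : ℕ) : (s \ {a,b}).Nonempty := by
  rw [← Finset.card_pos]
  have h1 : ({a,b} : Finset ℕ).card ≤ 2 := (Finset.card_insert_le _ _).trans (by simp)
  have := Finset.le_card_sdiff ({a,b} : Finset ℕ) s
  omega

lemma sdiff3_nonempty (s : Finset ℕ) (h : s.card = 3) (a b c : ℕ) (hne : s ≠ {a,b,c}) :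
    (s \ {a,b,c}).Nonempty := by
  rw [Finset.sdiff_nonempty]
  intro hsub
  exact hne (Finset.eq_of_subset_of_card_le hsub (by have := card3_le a b c; omega))

def Concl (A B : Fin 4 → Finset ℕ) : Prop :=
  ∃ x y : Fin 4 → ℕ, (∀ i, x i ∈ A i) ∧ (∀ i, y i ∈ B i) ∧
    (∀ i j, i ≠ j → x i ≠ y j) ∧ (∃ i j, x i ≠ x j) ∧ (∃ i j, y i ≠ y j)

lemma case1 (A B : Fin 4 → Finset ℕ) (hA : ∀ i, (A i).card = 3) (hB : ∀ i, (B i).card = 3)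
    (hcom : ∃ z, ∀ i, z ∈ A i) : Concl A B := by
  obtain ⟨xs, hxs⟩ := hcom
  obtain ⟨x', hx'⟩ := sdiff2_nonempty (A 3) (hA 3) xs xs
  simp only [Finset.mem_sdiff, Finset.mem_insert, Finset.mem_singleton, or_self] at hx'
  obtain ⟨hx'A, hx'ne⟩ := hx'
  have hCne : ∀ i, (B i \ {xs, x'}).Nonempty := fun i => sdiff2_nonempty (B i) (hB i) xs x'
  set f : Fin 4 → ℕ := fun i => (B i \ {xs, x'}).min' (hCne i) with hfdef
  have hf : ∀ i, f i ∈ B i \ {xs, x'} := fun i => Finset.min'_mem _ _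
  have hfB : ∀ i, f i ∈ B i ∧ f i ≠ xs ∧ f i ≠ x' := by
    intro i; have := hf i; simp only [Finset.mem_sdiff, Finset.mem_insert,
      Finset.mem_singleton] at this; tauto
  by_cases hconst : ∀ i j, f i = f j
  · by_cases hz : ∃ i, ∃ z ∈ B i \ ({xs, x'} : Finset ℕ), z ≠ f 0
    · obtain ⟨i, z, hzmem, hzne⟩ := hz
      simp only [Finset.mem_sdiff, Finset.mem_insert, Finset.mem_singleton] at hzmem
      refine ⟨![xs, xs, xs, x'], Function.update f i z, ?_, ?_, ?_, ?_, ?_⟩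
      · intro j; fin_cases j <;> simp [hxs, hx'A]
      · intro j
        rcases eq_or_ne j i with rfl | hne
        · simpa using hzmem.1
        · rw [Function.update_of_ne hne]; exact (hfB j).1
      · intro p q _
        have hq : Function.update f i z q ≠ xs ∧ Function.update f i z q ≠ x' := by
          rcases eq_or_ne q i with rfl | hne
          · simp only [Function.update_self]
            exact ⟨fun h => hzmem.2 (Or.inl h), fun h => hzmem.2 (Or.inr h)⟩
          · rw [Function.update_of_ne hne]; exact (hfB q).2
        have hval : ![xs, xs, xs, x'] p = xs ∨ ![xs, xs, xs, x'] p = x' := by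
          fin_cases p <;> simp
        rcases hval with h | h <;> rw [h]
        · exact fun he => hq.1 he.symm
        · exact fun he => hq.2 he.symm
      · exact ⟨0, 3, Ne.symm hx'ne⟩
      · rcases eq_or_ne i 0 with rfl | hne0
        · refine ⟨0, 1, ?_⟩
          rw [Function.update_self, Function.update_of_ne (by decide)]
          rw [hconst 1 0]; exact hzne
        · refine ⟨i, 0, ?_⟩
          rw [Function.update_self, Function.update_of_ne (Ne.symm hne0)]
          exact hzne
    · push_neg at hz
      have hBt : ∀ i, B i = {xs, x', f 0} := by
        intro i
        have hti : f 0 ∈ B i \ {xs, x'} := by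
          have := hz i (f i) (hf i); rw [← this]; exact hf i
        refine Finset.eq_of_subset_of_card_le ?_ ?_
        · intro w hw
          simp only [Finset.mem_insert, Finset.mem_singleton]
          by_cases hw1 : w = xs ∨ w = x'
          · tauto
          · right; right
            exact hz i w (by simp only [Finset.mem_sdiff, Finset.mem_insert,
              Finset.mem_singleton]; tauto)
        · rw [hB i]; exact card3_le xs x' (f 0)
      obtain ⟨z2, hz2⟩ := sdiff2_nonempty (A 2) (hA 2) xs x'
      simp only [Finset.mem_sdiff, Finset.mem_insert, Finset.mem_singleton] at hz2
      obtain ⟨hz2A, hz2ne⟩ := hz2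
      have k1 : xs ≠ x' := Ne.symm hx'ne
      have k2 : xs ≠ f 0 := Ne.symm (hfB 0).2.1
      have k3 : z2 ≠ x' := fun h => hz2ne (Or.inr h)
      have k4 : z2 ≠ xs := fun h => hz2ne (Or.inl h)
      have k5 : f 0 ≠ x' := (hfB 0).2.2
      refine ⟨![xs, xs, z2, xs], ![x', x', f 0, x'], ?_, ?_, ?_, ⟨2, 0, k4⟩, ⟨2, 0, k5⟩⟩
      · intro j; fin_cases j <;> simp [hxs, hz2A]
      · intro j; rw [hBt j]; fin_cases j <;> simp
      · intro p q hpq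
        fin_cases p <;> fin_cases q <;>
          first
            | exact absurd rfl hpq
            | exact k1
            | exact k2
            | exact k3
  · push_neg at hconst
    obtain ⟨p, q, hpq⟩ := hconst
    refine ⟨![xs, xs, xs, x'], f, ?_, fun j => (hfB j).1, ?_, ⟨0, 3, Ne.symm hx'ne⟩, ⟨p, q, hpq⟩⟩
    · intro j; fin_cases j <;> simp [hxs, hx'A]
    · intro i j _
      have h2 := (hfB j).2
      have hval : ![xs, xs, xs, x'] i = xs ∨ ![xs, xs, xs, x'] i = x' := by
        fin_cases i <;> simp
      rcases hval with h | h <;> rw [h]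
      · exact fun he => h2.1 he.symm
      · exact fun he => h2.2 he.symm

lemma sdiff3_nonempty' (s : Finset ℕ) (h : s.card = 3) (a b c : ℕ)
    (hout : a ∉ s ∨ b ∉ s ∨ c ∉ s) : (s \ {a,b,c}).Nonempty := by
  refine sdiff3_nonempty s h a b c ?_
  rintro rfl
  rcases hout with h' | h' | h' <;> simp at h'

lemma three_unique (S : Finset ℕ) (hS : S.card = 3) (u v a b : ℕ)
    (h1 : S = {u,v,a}) (h2 : S = {u,v,b}) : a = b := by
  by_contra hab
  have hb : b ∈ S := by rw [h2]; simp
  rw [h1] at hb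
  simp only [Finset.mem_insert, Finset.mem_singleton] at hb
  have hsub : S ⊆ {u, v} := by
    rw [h2]
    intro w hw
    simp only [Finset.mem_insert, Finset.mem_singleton] at hw ⊢
    rcases hw with rfl | rfl | rfl <;> tauto
  have := Finset.card_le_card hsub
  have h2' := Finset.card_insert_le u ({v} : Finset ℕ)
  simp at h2'
  omega

lemma concl_swap (A B : Fin 4 → Finset ℕ) (h : Concl B A) : Concl A B := by
  obtain ⟨x, y, hx, hy, hc, hnx, hny⟩ := h
  exact ⟨y, x, hy, hx, fun i j hij => (hc j i (Ne.symm hij)).symm, hny, hnx⟩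

lemma concl_perm (A B : Fin 4 → Finset ℕ) (σ : Equiv.Perm (Fin 4))
    (h : Concl (A ∘ σ) (B ∘ σ)) : Concl A B := by
  obtain ⟨x, y, hx, hy, hc, ⟨p, q, hpq⟩, ⟨r, s, hrs⟩⟩ := h
  refine ⟨x ∘ σ.symm, y ∘ σ.symm, ?_, ?_, ?_, ⟨σ p, σ q, by simpa using hpq⟩,
    ⟨σ r, σ s, by simpa using hrs⟩⟩
  · intro i; simpa using hx (σ.symm i)
  · intro i; simpa using hy (σ.symm i)
  · intro i j hij
    exact hc _ _ (fun h' => hij (by simpa using congrArg σ h'))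

lemma pair_case (A B : Fin 4 → Finset ℕ) (hA : ∀ i, (A i).card = 3)
    (hB : ∀ i, (B i).card = 3) (h01 : (A 0 ∩ A 1).Nonempty)
    (hAcom : ¬∃ z, ∀ i, z ∈ A i) (hBcom : ¬∃ z, ∀ i, z ∈ B i) : Concl A B := by
  obtain ⟨xs, hxs⟩ := h01
  rw [Finset.mem_inter] at hxs
  have hA2ne : (A 2).Nonempty := Finset.card_pos.mp (by rw [hA 2]; norm_num)
  set x2 := (A 2).min' hA2ne with hx2def
  have hx2mem : x2 ∈ A 2 := Finset.min'_mem _ _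
  have hx3 : ∃ t ∈ A 3, B 0 ≠ {xs, x2, t} ∧ B 1 ≠ {xs, x2, t} := by
    by_contra hcon
    push_neg at hcon
    obtain ⟨a, b, c, hab, hac, hbc, hA3eq⟩ := Finset.card_eq_three.mp (hA 3)
    have hamem : a ∈ A 3 := by rw [hA3eq]; simp
    have hbmem : b ∈ A 3 := by rw [hA3eq]; simp
    have hcmem : c ∈ A 3 := by rw [hA3eq]; simp
    have ha' : B 0 = {xs, x2, a} ∨ B 1 = {xs, x2, a} := by
      by_cases h : B 0 = {xs, x2, a}
      · exact Or.inl h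
      · exact Or.inr (hcon a hamem h)
    have hb' : B 0 = {xs, x2, b} ∨ B 1 = {xs, x2, b} := by
      by_cases h : B 0 = {xs, x2, b}
      · exact Or.inl h
      · exact Or.inr (hcon b hbmem h)
    have hc' : B 0 = {xs, x2, c} ∨ B 1 = {xs, x2, c} := by
      by_cases h : B 0 = {xs, x2, c}
      · exact Or.inl h
      · exact Or.inr (hcon c hcmem h)
    rcases ha' with ha0 | ha1 <;> rcases hb' with hb0 | hb1 <;> rcases hc' with hc0 | hc1 <;>
      first
        | exact hab (three_unique (B 0) (hB 0) xs x2 a b ha0 hb0)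
        | exact hab (three_unique (B 1) (hB 1) xs x2 a b ha1 hb1)
        | exact hac (three_unique (B 0) (hB 0) xs x2 a c ha0 hc0)
        | exact hac (three_unique (B 1) (hB 1) xs x2 a c ha1 hc1)
        | exact hbc (three_unique (B 0) (hB 0) xs x2 b c hb0 hc0)
        | exact hbc (three_unique (B 1) (hB 1) xs x2 b c hb1 hc1)
  obtain ⟨x3, hx3mem, hne0, hne1⟩ := hx3
  obtain ⟨y0, hy0⟩ := sdiff3_nonempty (B 0) (hB 0) xs x2 x3 hne0
  obtain ⟨y1, hy1⟩ := sdiff3_nonempty (B 1) (hB 1) xs x2 x3 hne1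
  obtain ⟨y2, hy2⟩ := sdiff2_nonempty (B 2) (hB 2) xs x3
  obtain ⟨y3, hy3⟩ := sdiff2_nonempty (B 3) (hB 3) xs x2
  simp only [Finset.mem_sdiff, Finset.mem_insert, Finset.mem_singleton] at hy0 hy1 hy2 hy3
  push_neg at hy0 hy1 hy2 hy3
  refine ⟨![xs, xs, x2, x3], ![y0, y1, y2, y3], ?_, ?_, ?_, ?_, ?_⟩
  · intro i; fin_cases i
    · exact hxs.1
    · exact hxs.2
    · exact hx2mem
    · exact hx3mem
  · intro i; fin_cases i
    · exact hy0.1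
    · exact hy1.1
    · exact hy2.1
    · exact hy3.1
  · intro p q hpq
    fin_cases p <;> fin_cases q <;>
      first
        | exact absurd rfl hpq
        | exact Ne.symm hy0.2.1
        | exact Ne.symm hy0.2.2.1
        | exact Ne.symm hy0.2.2.2
        | exact Ne.symm hy1.2.1
        | exact Ne.symm hy1.2.2.1
        | exact Ne.symm hy1.2.2.2
        | exact Ne.symm hy2.2.1
        | exact Ne.symm hy2.2.2
        | exact Ne.symm hy3.2.1
        | exact Ne.symm hy3.2.2
  · have hne' : ¬(xs = x2 ∧ xs = x3) := by
      rintro ⟨h2, h3⟩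
      refine hAcom ⟨xs, ?_⟩
      intro i; fin_cases i
      · exact hxs.1
      · exact hxs.2
      · exact h2 ▸ hx2mem
      · exact h3 ▸ hx3mem
    by_cases hx2' : xs = x2
    · exact ⟨0, 3, fun h => hne' ⟨hx2', h⟩⟩
    · exact ⟨0, 2, hx2'⟩
  · by_cases h1 : y0 = y1
    · by_cases h2 : y0 = y2
      · by_cases h3 : y0 = y3
        · exfalso
          refine hBcom ⟨y0, ?_⟩
          intro i; fin_cases i
          · exact hy0.1
          · exact h1 ▸ hy1.1
          · exact h2 ▸ hy2.1
          · exact h3 ▸ hy3.1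
        · exact ⟨0, 3, h3⟩
      · exact ⟨0, 2, h2⟩
    · exact ⟨0, 1, h1⟩
lemma disj_case (A B : Fin 4 → Finset ℕ) (hA : ∀ i, (A i).card = 3)
    (hB : ∀ i, (B i).card = 3)
    (hdA : ∀ i j : Fin 4, i ≠ j → ∀ z, z ∈ A i → z ∈ A j → False)
    (hdB : ∀ i j : Fin 4, i ≠ j → ∀ z, z ∈ B i → z ∈ B j → False) : Concl A B := by
  have pick : ∀ s t : Finset ℕ, s.card = 3 → ∃ v ∈ s, v ∉ t ∨ s ⊆ t := by
    intro s t hs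
    by_cases hn : (s \ t).Nonempty
    · obtain ⟨v, hv⟩ := hn
      rw [Finset.mem_sdiff] at hv
      exact ⟨v, hv.1, Or.inl hv.2⟩
    · rw [Finset.not_nonempty_iff_eq_empty, Finset.sdiff_eq_empty_iff_subset] at hn
      exact ⟨(s.min' (Finset.card_pos.mp (by omega))), Finset.min'_mem _ _, Or.inr hn⟩
  obtain ⟨x0, hx0A, hx0alt⟩ := pick (A 0) (B 3) (hA 0)
  obtain ⟨x1, hx1A, hx1alt⟩ := pick (A 1) (B 0) (hA 1)
  obtain ⟨x2, hx2A, hx2alt⟩ := pick (A 2) (B 1) (hA 2)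
  obtain ⟨x3, hx3A, hx3alt⟩ := pick (A 3) (B 2) (hA 3)
  have hsub_eq : ∀ i j : Fin 4, A i ⊆ B j → A i = B j := fun i j h =>
    Finset.eq_of_subset_of_card_le h (by rw [hA i, hB j])
  -- for B 0: x1 ∉ B 0 or x2 ∉ B 0
  have hg0 : x1 ∉ B 0 ∨ x2 ∉ B 0 ∨ x3 ∉ B 0 := by
    rcases hx1alt with h | h
    · exact Or.inl h
    · have heq := hsub_eq 1 0 h
      exact Or.inr (Or.inl (fun hx => hdA 2 1 (by decide) x2 hx2A (heq ▸ hx)))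
  have hg1 : x0 ∉ B 1 ∨ x2 ∉ B 1 ∨ x3 ∉ B 1 := by
    rcases hx2alt with h | h
    · exact Or.inr (Or.inl h)
    · have heq := hsub_eq 2 1 h
      exact Or.inr (Or.inr (fun hx => hdA 3 2 (by decide) x3 hx3A (heq ▸ hx)))
  have hg2 : x0 ∉ B 2 ∨ x1 ∉ B 2 ∨ x3 ∉ B 2 := by
    rcases hx3alt with h | h
    · exact Or.inr (Or.inr h)
    · have heq := hsub_eq 3 2 h
      exact Or.inl (fun hx => hdA 0 3 (by decide) x0 hx0A (heq ▸ hx))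
  have hg3 : x0 ∉ B 3 ∨ x1 ∉ B 3 ∨ x2 ∉ B 3 := by
    rcases hx0alt with h | h
    · exact Or.inl h
    · have heq := hsub_eq 0 3 h
      exact Or.inr (Or.inl (fun hx => hdA 1 0 (by decide) x1 hx1A (heq ▸ hx)))
  obtain ⟨y0, hy0⟩ := sdiff3_nonempty' (B 0) (hB 0) x1 x2 x3 hg0
  obtain ⟨y1, hy1⟩ := sdiff3_nonempty' (B 1) (hB 1) x0 x2 x3 hg1
  obtain ⟨y2, hy2⟩ := sdiff3_nonempty' (B 2) (hB 2) x0 x1 x3 hg2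
  obtain ⟨y3, hy3⟩ := sdiff3_nonempty' (B 3) (hB 3) x0 x1 x2 hg3
  simp only [Finset.mem_sdiff, Finset.mem_insert, Finset.mem_singleton] at hy0 hy1 hy2 hy3
  push_neg at hy0 hy1 hy2 hy3
  refine ⟨![x0, x1, x2, x3], ![y0, y1, y2, y3], ?_, ?_, ?_, ?_, ?_⟩
  · intro i; fin_cases i
    · exact hx0A
    · exact hx1A
    · exact hx2A
    · exact hx3A
  · intro i; fin_cases i
    · exact hy0.1
    · exact hy1.1
    · exact hy2.1
    · exact hy3.1
  · intro p q hpq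
    fin_cases p <;> fin_cases q <;>
      first
        | exact absurd rfl hpq
        | exact Ne.symm hy0.2.1
        | exact Ne.symm hy0.2.2.1
        | exact Ne.symm hy0.2.2.2
        | exact Ne.symm hy1.2.1
        | exact Ne.symm hy1.2.2.1
        | exact Ne.symm hy1.2.2.2
        | exact Ne.symm hy2.2.1
        | exact Ne.symm hy2.2.2.1
        | exact Ne.symm hy2.2.2.2
        | exact Ne.symm hy3.2.1
        | exact Ne.symm hy3.2.2.1
        | exact Ne.symm hy3.2.2.2
  · exact ⟨0, 1, fun h => hdA 0 1 (by decide) x0 hx0A ((show x0 = x1 from h) ▸ hx1A)⟩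
  · exact ⟨0, 1, fun h => hdB 0 1 (by decide) y0 hy0.1 ((show y0 = y1 from h) ▸ hy1.1)⟩

lemma key (A B : Fin 4 → Finset ℕ) (hA : ∀ i, (A i).card = 3)
    (hB : ∀ i, (B i).card = 3) : Concl A B := by
  by_cases h1 : ∃ z, ∀ i, z ∈ A i
  · exact case1 A B hA hB h1
  by_cases h2 : ∃ z, ∀ i, z ∈ B i
  · exact concl_swap A B (case1 B A hB hA h2)
  by_cases h3 : ∃ i j : Fin 4, i ≠ j ∧ (A i ∩ A j).Nonempty
  · obtain ⟨i, j, hij, hint⟩ := h3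
    set τ : Equiv.Perm (Fin 4) := Equiv.swap 0 i with hτ
    have hj' : τ j ≠ 0 := by
      intro h
      exact hij (by have := congrArg τ h; rw [Equiv.swap_apply_self, Equiv.swap_apply_left] at this; exact this.symm)
    set σ : Equiv.Perm (Fin 4) := (Equiv.swap 1 (τ j)).trans τ with hσ
    have hσ0 : σ 0 = i := by
      rw [hσ, Equiv.trans_apply, Equiv.swap_apply_of_ne_of_ne (by decide) (Ne.symm hj'),
        hτ, Equiv.swap_apply_left]
    have hσ1 : σ 1 = j := by
      rw [hσ, Equiv.trans_apply, Equiv.swap_apply_left, hτ, Equiv.swap_apply_self]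
    refine concl_perm A B σ (pair_case _ _ (fun k => hA _) (fun k => hB _) ?_ ?_ ?_)
    · show ((A (σ 0)) ∩ (A (σ 1))).Nonempty
      rwa [hσ0, hσ1]
    · rintro ⟨z, hz⟩
      exact h1 ⟨z, fun m => by simpa using hz (σ.symm m)⟩
    · rintro ⟨z, hz⟩
      exact h2 ⟨z, fun m => by simpa using hz (σ.symm m)⟩
  by_cases h4 : ∃ i j : Fin 4, i ≠ j ∧ (B i ∩ B j).Nonempty
  · obtain ⟨i, j, hij, hint⟩ := h4
    set τ : Equiv.Perm (Fin 4) := Equiv.swap 0 i with hτ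
    have hj' : τ j ≠ 0 := by
      intro h
      exact hij (by have := congrArg τ h; rw [Equiv.swap_apply_self, Equiv.swap_apply_left] at this; exact this.symm)
    set σ : Equiv.Perm (Fin 4) := (Equiv.swap 1 (τ j)).trans τ with hσ
    have hσ0 : σ 0 = i := by
      rw [hσ, Equiv.trans_apply, Equiv.swap_apply_of_ne_of_ne (by decide) (Ne.symm hj'),
        hτ, Equiv.swap_apply_left]
    have hσ1 : σ 1 = j := by
      rw [hσ, Equiv.trans_apply, Equiv.swap_apply_left, hτ, Equiv.swap_apply_self]
    refine concl_swap A B (concl_perm B A σ (pair_case _ _ (fun k => hB _) (fun k => hA _) ?_ ?_ ?_))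
    · show ((B (σ 0)) ∩ (B (σ 1))).Nonempty
      rwa [hσ0, hσ1]
    · rintro ⟨z, hz⟩
      exact h2 ⟨z, fun m => by simpa using hz (σ.symm m)⟩
    · rintro ⟨z, hz⟩
      exact h1 ⟨z, fun m => by simpa using hz (σ.symm m)⟩
  · push_neg at h3 h4
    refine disj_case A B hA hB ?_ ?_
    · intro i j hij z hzi hzj
      exact Finset.not_nonempty_iff_eq_empty.mpr (h3 i j hij) ⟨z, Finset.mem_inter.mpr ⟨hzi, hzj⟩⟩
    · intro i j hij z hzi hzj
      exact Finset.not_nonempty_iff_eq_empty.mpr (h4 i j hij) ⟨z, Finset.mem_inter.mpr ⟨hzi, hzj⟩⟩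

theorem prism_four_equitably_three_choosable
    (L : Fin 4 × Fin 2 → Finset ℕ) (hL : ∀ v, (L v).card = 3) :
    ∃ c : Fin 4 × Fin 2 → ℕ, IsProperListColoring L c ∧
      ∀ k : ℕ, (colorClass c k).card ≤ 3 := by
  obtain ⟨x, y, hx, hy, hcross, hnx, hny⟩ :=
    key ![L (0,0), L (2,0), L (1,1), L (3,1)] ![L (2,1), L (0,1), L (3,0), L (1,0)]
      (fun i => by fin_cases i <;> exact hL _) (fun i => by fin_cases i <;> exact hL _)
  refine ⟨fun p => ![![x 0, y 1], ![y 3, x 2], ![x 1, y 0], ![y 2, x 3]] p.1 p.2, ⟨?_, ?_⟩, ?_⟩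
  · intro v
    fin_cases v
    · exact hx 0
    · exact hy 1
    · exact hy 3
    · exact hx 2
    · exact hx 1
    · exact hy 0
    · exact hy 2
    · exact hx 3
  · intro v w hadj
    simp only [prism, SimpleGraph.fromRel_adj] at hadj
    fin_cases v <;> fin_cases w <;>
      first
        | exact absurd hadj (by decide)
        | exact hcross _ _ (by decide)
        | exact (hcross _ _ (by decide)).symm
  · intro k
    by_cases hxk : ∃ i, x i = k
    · by_cases hyk : ∃ j, y j = k
      · obtain ⟨i, hi⟩ := hxk
        obtain ⟨j, hj⟩ := hyk
        have hij : i = j := by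
          by_contra h
          exact hcross i j h (hi.trans hj.symm)
        subst hij
        fin_cases i
        · have hsub : colorClass (fun p => ![![x 0, y 1], ![y 3, x 2], ![x 1, y 0], ![y 2, x 3]] p.1 p.2) k ⊆ ({((0:Fin 4),(0:Fin 2)), (2,1)} : Finset (Fin 4 × Fin 2)) := by
            intro v hv
            simp only [colorClass, Finset.mem_filter, Finset.mem_univ, true_and] at hv
            fin_cases v <;>
              first
                | decide
                | exact absurd (hv.trans hj.symm) (hcross _ _ (by decide))
                | exact absurd (hi.trans hv.symm) (hcross _ _ (by decide))
          exact le_trans (Finset.card_le_card hsub) (by decide)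
        · have hsub : colorClass (fun p => ![![x 0, y 1], ![y 3, x 2], ![x 1, y 0], ![y 2, x 3]] p.1 p.2) k ⊆ ({((2:Fin 4),(0:Fin 2)), (0,1)} : Finset (Fin 4 × Fin 2)) := by
            intro v hv
            simp only [colorClass, Finset.mem_filter, Finset.mem_univ, true_and] at hv
            fin_cases v <;>
              first
                | decide
                | exact absurd (hv.trans hj.symm) (hcross _ _ (by decide))
                | exact absurd (hi.trans hv.symm) (hcross _ _ (by decide))
          exact le_trans (Finset.card_le_card hsub) (by decide)
        · have hsub : colorClass (fun p => ![![x 0, y 1], ![y 3, x 2], ![x 1, y 0], ![y 2, x 3]] p.1 p.2) k ⊆ ({((1:Fin 4),(1:Fin 2)), (3,0)} : Finset (Fin 4 × Fin 2)) := by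
            intro v hv
            simp only [colorClass, Finset.mem_filter, Finset.mem_univ, true_and] at hv
            fin_cases v <;>
              first
                | decide
                | exact absurd (hv.trans hj.symm) (hcross _ _ (by decide))
                | exact absurd (hi.trans hv.symm) (hcross _ _ (by decide))
          exact le_trans (Finset.card_le_card hsub) (by decide)
        · have hsub : colorClass (fun p => ![![x 0, y 1], ![y 3, x 2], ![x 1, y 0], ![y 2, x 3]] p.1 p.2) k ⊆ ({((3:Fin 4),(1:Fin 2)), (1,0)} : Finset (Fin 4 × Fin 2)) := by
            intro v hv
            simp only [colorClass, Finset.mem_filter, Finset.mem_univ, true_and] at hv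
            fin_cases v <;>
              first
                | decide
                | exact absurd (hv.trans hj.symm) (hcross _ _ (by decide))
                | exact absurd (hi.trans hv.symm) (hcross _ _ (by decide))
          exact le_trans (Finset.card_le_card hsub) (by decide)
      · push_neg at hyk
        have hex : ∃ i0, x i0 ≠ k := by
          by_contra h
          push_neg at h
          obtain ⟨p, q, hpq⟩ := hnx
          exact hpq ((h p).trans (h q).symm)
        obtain ⟨i0, hi0⟩ := hex
        fin_cases i0
        · have hsub : colorClass (fun p => ![![x 0, y 1], ![y 3, x 2], ![x 1, y 0], ![y 2, x 3]] p.1 p.2) k ⊆ ({((2:Fin 4),(0:Fin 2)), (1,1), (3,1)} : Finset (Fin 4 × Fin 2)) := by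
            intro v hv
            simp only [colorClass, Finset.mem_filter, Finset.mem_univ, true_and] at hv
            fin_cases v <;>
              first
                | decide
                | exact absurd hv (hyk _)
                | exact absurd hv hi0
          exact le_trans (Finset.card_le_card hsub) (by decide)
        · have hsub : colorClass (fun p => ![![x 0, y 1], ![y 3, x 2], ![x 1, y 0], ![y 2, x 3]] p.1 p.2) k ⊆ ({((0:Fin 4),(0:Fin 2)), (1,1), (3,1)} : Finset (Fin 4 × Fin 2)) := by
            intro v hv
            simp only [colorClass, Finset.mem_filter, Finset.mem_univ, true_and] at hv
            fin_cases v <;>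
              first
                | decide
                | exact absurd hv (hyk _)
                | exact absurd hv hi0
          exact le_trans (Finset.card_le_card hsub) (by decide)
        · have hsub : colorClass (fun p => ![![x 0, y 1], ![y 3, x 2], ![x 1, y 0], ![y 2, x 3]] p.1 p.2) k ⊆ ({((0:Fin 4),(0:Fin 2)), (2,0), (3,1)} : Finset (Fin 4 × Fin 2)) := by
            intro v hv
            simp only [colorClass, Finset.mem_filter, Finset.mem_univ, true_and] at hv
            fin_cases v <;>
              first
                | decide
                | exact absurd hv (hyk _)
                | exact absurd hv hi0
          exact le_trans (Finset.card_le_card hsub) (by decide)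
        · have hsub : colorClass (fun p => ![![x 0, y 1], ![y 3, x 2], ![x 1, y 0], ![y 2, x 3]] p.1 p.2) k ⊆ ({((0:Fin 4),(0:Fin 2)), (2,0), (1,1)} : Finset (Fin 4 × Fin 2)) := by
            intro v hv
            simp only [colorClass, Finset.mem_filter, Finset.mem_univ, true_and] at hv
            fin_cases v <;>
              first
                | decide
                | exact absurd hv (hyk _)
                | exact absurd hv hi0
          exact le_trans (Finset.card_le_card hsub) (by decide)
    · push_neg at hxk
      have hex : ∃ j0, y j0 ≠ k := by
        by_contra h
        push_neg at h
        obtain ⟨p, q, hpq⟩ := hny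
        exact hpq ((h p).trans (h q).symm)
      obtain ⟨j0, hj0⟩ := hex
      fin_cases j0
      · have hsub : colorClass (fun p => ![![x 0, y 1], ![y 3, x 2], ![x 1, y 0], ![y 2, x 3]] p.1 p.2) k ⊆ ({((0:Fin 4),(1:Fin 2)), (3,0), (1,0)} : Finset (Fin 4 × Fin 2)) := by
          intro v hv
          simp only [colorClass, Finset.mem_filter, Finset.mem_univ, true_and] at hv
          fin_cases v <;>
            first
              | decide
              | exact absurd hv (hxk _)
              | exact absurd hv hj0
        exact le_trans (Finset.card_le_card hsub) (by decide)
      · have hsub : colorClass (fun p => ![![x 0, y 1], ![y 3, x 2], ![x 1, y 0], ![y 2, x 3]] p.1 p.2) k ⊆ ({((2:Fin 4),(1:Fin 2)), (3,0), (1,0)} : Finset (Fin 4 × Fin 2)) := by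
          intro v hv
          simp only [colorClass, Finset.mem_filter, Finset.mem_univ, true_and] at hv
          fin_cases v <;>
            first
              | decide
              | exact absurd hv (hxk _)
              | exact absurd hv hj0
        exact le_trans (Finset.card_le_card hsub) (by decide)
      · have hsub : colorClass (fun p => ![![x 0, y 1], ![y 3, x 2], ![x 1, y 0], ![y 2, x 3]] p.1 p.2) k ⊆ ({((2:Fin 4),(1:Fin 2)), (0,1), (1,0)} : Finset (Fin 4 × Fin 2)) := by
          intro v hv
          simp only [colorClass, Finset.mem_filter, Finset.mem_univ, true_and] at hv
          fin_cases v <;>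
            first
              | decide
              | exact absurd hv (hxk _)
              | exact absurd hv hj0
        exact le_trans (Finset.card_le_card hsub) (by decide)
      · have hsub : colorClass (fun p => ![![x 0, y 1], ![y 3, x 2], ![x 1, y 0], ![y 2, x 3]] p.1 p.2) k ⊆ ({((2:Fin 4),(1:Fin 2)), (0,1), (3,0)} : Finset (Fin 4 × Fin 2)) := by
          intro v hv
          simp only [colorClass, Finset.mem_filter, Finset.mem_univ, true_and] at hv
          fin_cases v <;>
            first
              | decide
              | exact absurd hv (hxk _)
              | exact absurd hv hj0
        exact le_trans (Finset.card_le_card hsub) (by decide)
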